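/- Let X ⊆ A^ℤ be a minimal subshift and let c : A* → ℝ be a letter-coboundary on X. Then Σ_{a∈A} μ([a]) · c(a) = 0 for every S-invariant Borel probability measure μ on X. -/

import Mathlib

open Filter Topology MeasureTheory

namespace SAdicPaper

variable {A B : Type*}

/-! ### Basic symbolic dynamics on the full shift `ℤ → A` -/

/-- The shift map `S` on the full shift. -/
def shift (x : ℤ → A) : ℤ → A := fun n => x (n + 1)

/-- The iterate `S^k` of the shift, for `k : ℤ`. -/
def shiftIter (k : ℤ) (x : ℤ → A) : ℤ → A := fun n => x (n + k)

/-- The finite word `x_i x_{i+1} ⋯ x_{i+l-1}`. -/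
def window (x : ℤ → A) (i : ℤ) (l : ℕ) : List A :=
  (List.range l).map fun k => x (i + (k : ℤ))

/-- A subshift: a closed shift-invariant subset of the full shift. -/
def IsSubshift [TopologicalSpace A] (X : Set (ℤ → A)) : Prop :=
  IsClosed X ∧ shift '' X = X

/-- The language of a set of bi-infinite sequences: all finite factors of its points. -/
def langOf (X : Set (ℤ → A)) : Set (List A) :=
  {w | ∃ x ∈ X, ∃ i : ℤ, w = window x i w.length}

/-- The (two-sided) orbit of a point under the shift. -/
def orbit (x : ℤ → A) : Set (ℤ → A) := Set.range fun k : ℤ => shiftIter k x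

/-- A minimal subshift: nonempty and every orbit is dense. -/
def IsMinimalSubshift [TopologicalSpace A] (X : Set (ℤ → A)) : Prop :=
  IsSubshift X ∧ X.Nonempty ∧ ∀ x ∈ X, X ⊆ closure (orbit x)

/-- A transitive subshift: some orbit is dense. -/
def IsTransitiveSubshift [TopologicalSpace A] (X : Set (ℤ → A)) : Prop :=
  IsSubshift X ∧ ∃ x ∈ X, X ⊆ closure (orbit x)

/-- `α` is a continuous additive eigenvalue of `(X, S)`: there is a continuous
`g : X → ℝ/ℤ` with `g (S x) = g x + α (mod ℤ)`. -/
def IsEigenvalue [TopologicalSpace A] (X : Set (ℤ → A)) (α : ℝ) : Prop :=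
  ∃ g : (ℤ → A) → AddCircle (1 : ℝ), ContinuousOn g X ∧
    ∀ x ∈ X, g (shift x) = g x + (α : AddCircle (1 : ℝ))

/-- `‖x‖`: distance from a real number to the nearest integer. -/
noncomputable def dnint (x : ℝ) : ℝ := |x - round x|

/-- `{x}`: the centered fractional part, the unique element of `[-1/2, 1/2)`
such that `x + {x}` is an integer. -/
noncomputable def cfrac (x : ℝ) : ℝ := (⌈x - 1 / 2⌉ : ℤ) - x

/-- The cylinder `[u] = {x ∈ X : x_{[0,|u|)} = u}`. -/
def cyl (X : Set (ℤ → A)) (u : List A) : Set (ℤ → A) :=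
  {x ∈ X | window x 0 u.length = u}

/-- The factor complexity `p_X(n)`. -/
noncomputable def pcomplex (X : Set (ℤ → A)) (n : ℕ) : ℕ :=
  Set.ncard {w : List A | w ∈ langOf X ∧ w.length = n}

/-! ### Letter-coboundaries -/

/-- The extension of a map `c : A → ℝ` to the monoid morphism `A* → (ℝ, +)`. -/
def wsum (c : A → ℝ) (w : List A) : ℝ := (w.map c).sum

/-- `w` is a return word to the letter `a` in `X`: `w ++ [a] ∈ L(X)` and `w ++ [a]`
contains exactly two occurrences of `a`, one as a prefix and one as a suffix. -/
def IsReturnWord (X : Set (ℤ → A)) (a : A) (w : List A) : Prop :=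
  w ++ [a] ∈ langOf X ∧ w.head? = some a ∧
    ∀ (i : ℕ) (h : i < w.length), 0 < i → w.get ⟨i, h⟩ ≠ a

/-- A letter-coboundary on `X` (identified with its values on letters):
a morphism `A* → (ℝ, +)` vanishing on all return words to letters. -/
def IsLetterCoboundary (X : Set (ℤ → A)) (c : A → ℝ) : Prop :=
  ∀ (a : A) (w : List A), IsReturnWord X a w → wsum c w = 0

/-- `w` is a return word to the (nonempty) word `u` in `X`. -/
def IsReturnWordTo (X : Set (ℤ → A)) (u w : List A) : Prop :=
  w ≠ [] ∧ (w ++ u) ∈ langOf X ∧ u <+: (w ++ u) ∧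
    ∀ i : ℕ, ((w ++ u).drop i).take u.length = u → i + u.length ≤ (w ++ u).length →
      i = 0 ∨ i = w.length

/-! ### Extension graphs -/

/-- Vertices of the extension graph of `w`: two copies of the alphabet, restricted to the
letters that extend `w` on the corresponding side. -/
def extVertex (X : Set (ℤ → A)) (w : List A) : A ⊕ A → Prop
  | Sum.inl a => (a :: w) ∈ langOf X
  | Sum.inr b => (w ++ [b]) ∈ langOf X

/-- The edge relation of the extension graph: `a_L — b_R` when `a w b ∈ L(X)`. -/
def extAdjRaw (X : Set (ℤ → A)) (w : List A) (u v : A ⊕ A) : Prop :=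
  ∃ a b, u = Sum.inl a ∧ v = Sum.inr b ∧ (a :: (w ++ [b])) ∈ langOf X

/-- The extension graph `Γ_X(w)` of a word `w` in `X`. -/
def extGraph (X : Set (ℤ → A)) (w : List A) :
    SimpleGraph {v : A ⊕ A // extVertex X w v} where
  Adj u v := extAdjRaw X w u.1 v.1 ∨ extAdjRaw X w v.1 u.1
  symm := ⟨fun u v h => Or.symm h⟩
  loopless := ⟨by
    rintro ⟨v, hv⟩ h
    rcases h with ⟨a, b, h1, h2, -⟩ | ⟨a, b, h1, h2, -⟩ <;> (rw [h1] at h2; simp at h2)⟩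

/-- The total number of connected components of the extension graphs of all
words of length `m` in `L(X)`. -/
noncomputable def totalComponents (X : Set (ℤ → A)) (m : ℕ) : ℕ :=
  Nat.card (Σ w : {w : List A // w ∈ langOf X ∧ w.length = m},
    (extGraph X w.1).ConnectedComponent)

/-! ### The vector space of letter-coboundaries -/

lemma wsum_zero (w : List A) : wsum (0 : A → ℝ) w = 0 := by
  induction w with
  | nil => rfl
  | cons a t ih => simp [wsum, List.map_cons, List.sum_cons] at ih ⊢; exact ih

lemma wsum_add (c d : A → ℝ) (w : List A) :
    wsum (c + d) w = wsum c w + wsum d w := by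
  induction w with
  | nil => simp [wsum]
  | cons a t ih =>
      simp only [wsum, List.map_cons, List.sum_cons, Pi.add_apply] at ih ⊢
      rw [ih]; ring

lemma wsum_smul (r : ℝ) (c : A → ℝ) (w : List A) :
    wsum (r • c) w = r * wsum c w := by
  induction w with
  | nil => simp [wsum]
  | cons a t ih =>
      simp only [wsum, List.map_cons, List.sum_cons, Pi.smul_apply, smul_eq_mul] at ih ⊢
      rw [ih]; ring

/-- The `ℝ`-vector space `C_X` of letter-coboundaries on `X`. -/
def cobSpace (X : Set (ℤ → A)) : Submodule ℝ (A → ℝ) where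
  carrier := {c | IsLetterCoboundary X c}
  zero_mem' := fun _ w _ => wsum_zero w
  add_mem' := by
    intro c d hc hd a w hw
    rw [wsum_add, hc a w hw, hd a w hw, add_zero]
  smul_mem' := by
    intro r c hc a w hw
    rw [wsum_smul, hc a w hw, mul_zero]

/-! ### Directive sequences -/

variable {Alph : ℕ → Type*}

/-- `seg τ n k = τ_{n,n+k} = τ_n ∘ τ_{n+1} ∘ ⋯ ∘ τ_{n+k-1}`, applied to a letter. -/
def seg (τ : ∀ n, Alph (n + 1) → List (Alph n)) (n : ℕ) :
    (k : ℕ) → Alph (n + k) → List (Alph n)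
  | 0, a => [a]
  | k + 1, a => (τ (n + k) a).flatMap (seg τ n k)

/-- `toZero τ n = τ_{0,n}`, applied to a letter. -/
def toZero (τ : ∀ n, Alph (n + 1) → List (Alph n)) :
    (n : ℕ) → Alph n → List (Alph 0)
  | 0, a => [a]
  | n + 1, a => (τ n a).flatMap (toZero τ n)

/-- The height `h_n(u) = |τ_{0,n}(u)|` (so `h_0(u) = |u|`). -/
def heightW (τ : ∀ n, Alph (n + 1) → List (Alph n)) (n : ℕ) (u : List (Alph n)) : ℕ :=
  (u.flatMap (toZero τ n)).length

/-- Every `τ_n` is a substitution: non-erasing and letter-onto. -/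
def IsDirective (τ : ∀ n, Alph (n + 1) → List (Alph n)) : Prop :=
  ∀ n, (∀ a : Alph (n + 1), τ n a ≠ []) ∧ ∀ b : Alph n, ∃ a : Alph (n + 1), b ∈ τ n a

/-- The level-`n` language `L^{(n)}_τ`: the words occurring in some `τ_{n,m}(a)`, `m > n`. -/
def levelLang (τ : ∀ n, Alph (n + 1) → List (Alph n)) (n : ℕ) : Set (List (Alph n)) :=
  {w | ∃ k : ℕ, 0 < k ∧ ∃ a : Alph (n + k), w <:+: seg τ n k a}

/-- The level-`n` subshift `X^{(n)}_τ`: the points all of whose factors lie in `L^{(n)}_τ`.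
`X_τ = levelShift τ 0`. -/
def levelShift (τ : ∀ n, Alph (n + 1) → List (Alph n)) (n : ℕ) : Set (ℤ → Alph n) :=
  {x | ∀ (i : ℤ) (l : ℕ), window x i l ∈ levelLang τ n}

/-- Primitivity of a directive sequence. -/
def IsPrimitiveSeq (τ : ∀ n, Alph (n + 1) → List (Alph n)) : Prop :=
  ∀ n, ∃ k, 0 < k ∧ ∀ (a : Alph (n + k)) (b : Alph n), b ∈ seg τ n k a

/-- Positivity of a directive sequence: every letter of `A_n` occurs in every `τ_n(b)`. -/
def IsPositiveSeq (τ : ∀ n, Alph (n + 1) → List (Alph n)) : Prop :=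
  ∀ (n : ℕ) (b : Alph (n + 1)) (a : Alph n), a ∈ τ n b

/-- `y` is the image of the bi-infinite sequence `x` under the substitution `σ`,
aligned so that `σ(x_0)` starts at position `0`. -/
def SubstPoint (σ : B → List A) (x : ℤ → B) (y : ℤ → A) : Prop :=
  ∀ m : ℕ,
    window y (-(∑ t ∈ Finset.range m, ((σ (x (-1 - (t : ℤ)))).length : ℤ)))
        ((window x (-(m : ℤ)) (2 * m + 1)).flatMap σ).length
      = (window x (-(m : ℤ)) (2 * m + 1)).flatMap σ

/-- The base `B_n(a) = {τ_{0,n}(x) : x ∈ X^{(n)}_τ, x_0 = a}` of the Kakutani–Rokhlin tower. -/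
def baseSet (τ : ∀ n, Alph (n + 1) → List (Alph n)) (n : ℕ) (a : Alph n) :
    Set (ℤ → Alph 0) :=
  {y | ∃ x ∈ levelShift τ n, x 0 = a ∧ SubstPoint (toZero τ n) x y}

/-- Recognizability: for every `n ≥ 1`, the sets `S^k B_n(a)`, `a ∈ A_n`,
`0 ≤ k < h_n(a)`, are pairwise disjoint. -/
def IsRecognizable (τ : ∀ n, Alph (n + 1) → List (Alph n)) : Prop :=
  ∀ n : ℕ, 1 ≤ n → ∀ (a a' : Alph n) (k k' : ℕ),
    k < heightW τ n [a] → k' < heightW τ n [a'] → ¬(a = a' ∧ k = k') →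
    Disjoint (shiftIter (k : ℤ) '' baseSet τ n a) (shiftIter (k' : ℤ) '' baseSet τ n a')

/-- `min_{a ∈ A_n} |τ_{0,n}(a)| → ∞`. -/
def IsEverywhereGrowing (τ : ∀ n, Alph (n + 1) → List (Alph n)) : Prop :=
  ∀ N : ℕ, ∃ M : ℕ, ∀ n, M ≤ n → ∀ a : Alph n, N ≤ (toZero τ n a).length

/-- Decisiveness of an everywhere growing directive sequence. -/
def IsDecisive (τ : ∀ n, Alph (n + 1) → List (Alph n)) : Prop :=
  IsEverywhereGrowing τ ∧
  ∀ n : ℕ, ∃ l r : Alph (n + 1) → Alph n,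
    ∀ a b : Alph (n + 1), [a, b] ∈ langOf (levelShift τ (n + 1)) →
      (τ n b).head? = some (r a) ∧ (τ n a).getLast? = some (l b)

/-- Unimodularity: every incidence matrix has determinant `±1`. -/
def IsUnimodularSeq [∀ n, Fintype (Alph n)] [∀ n, DecidableEq (Alph n)]
    (τ : ∀ n, Alph (n + 1) → List (Alph n)) : Prop :=
  ∀ n, ∃ e : Alph n ≃ Alph (n + 1),
    (Matrix.det (Matrix.of fun b a : Alph n => ((τ n (e a)).count b : ℤ))).natAbs = 1

/-! ### Single substitutions -/

/-- Iteration `τ^m` of a substitution on a single alphabet, applied to a letter. -/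
def substPow (τ : A → List A) : ℕ → A → List A
  | 0, a => [a]
  | k + 1, a => (τ a).flatMap (substPow τ k)

/-- The substitutive subshift `X_τ` generated by the constant directive sequence `(τ)`. -/
def substShift (τ : A → List A) : Set (ℤ → A) :=
  {x | ∀ (i : ℤ) (l : ℕ), ∃ m : ℕ, 1 ≤ m ∧ ∃ a : A, window x i l <:+: substPow τ m a}

/-- The incidence matrix of a substitution (with real entries). -/
def incMat [DecidableEq A] (τ : A → List A) : Matrix A A ℝ :=
  Matrix.of fun b a => ((τ a).count b : ℝ)

/-- A primitive substitution: some power of its incidence matrix is strictly positive. -/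
def IsPrimitiveSubst [Fintype A] [DecidableEq A] (τ : A → List A) : Prop :=
  ∃ k : ℕ, 0 < k ∧ ∀ b a : A, 0 < (incMat τ ^ k) b a

/-- Aperiodicity: `X_τ` contains no shift-periodic point. -/
def IsAperiodicSubst (τ : A → List A) : Prop :=
  ∀ x ∈ substShift τ, ∀ p : ℕ, 0 < p → shiftIter (p : ℤ) x ≠ x

/-- The stable space `V_{X_τ}` of row vectors `v` with `v M_τ^n → 0`. -/
def stableSpace [Fintype A] [DecidableEq A] (τ : A → List A) : Submodule ℝ (A → ℝ) where
  carrier := {v | Tendsto (fun n : ℕ => Matrix.vecMul v (incMat τ ^ n)) atTop (nhds 0)}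
  zero_mem' := by
    simp only [Set.mem_setOf_eq, Matrix.zero_vecMul]
    exact tendsto_const_nhds
  add_mem' := by
    intro u v hu hv
    have := hu.add hv
    simp only [Set.mem_setOf_eq] at *
    simpa [Matrix.add_vecMul] using this
  smul_mem' := by
    intro r v hv
    have := hv.const_smul r
    simp only [Set.mem_setOf_eq] at *
    simpa [Matrix.vecMul_smul, Matrix.smul_vecMul] using this

/-- `X` is balanced on the letter `a`. -/
def IsBalancedOnLetter [DecidableEq A] (X : Set (ℤ → A)) (a : A) : Prop :=
  ∃ C : ℕ, 0 < C ∧ ∀ w ∈ langOf X, ∀ w' ∈ langOf X, w.length = w'.length →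
    |(w.count a : ℤ) - (w'.count a : ℤ)| ≤ (C : ℤ)

/-- `X` is balanced on letters. -/
def IsBalancedOnLetters [DecidableEq A] (X : Set (ℤ → A)) : Prop :=
  ∀ a : A, IsBalancedOnLetter X a

/-- A function `f : X → ℝ` is balanced on a (minimal) subshift `X`. -/
def IsBalancedFn (X : Set (ℤ → A)) (f : (ℤ → A) → ℝ) : Prop :=
  ∃ C : ℝ, 0 < C ∧ ∀ x ∈ X, ∀ y ∈ X, ∀ n : ℕ, 1 ≤ n →
    |∑ i ∈ Finset.range (n + 1), (f (shiftIter (i : ℤ) x) - f (shiftIter (i : ℤ) y))| ≤ C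

/-! ### aux -/

lemma list_sum_range (f : ℕ → ℝ) (n : ℕ) :
    ((List.range n).map f).sum = ∑ k ∈ Finset.range n, f k := by
  induction n with
  | zero => simp
  | succ n ih => simp [List.range_succ, Finset.sum_range_succ, ih]

lemma window_eq (x : ℤ → A) (i : ℤ) (l : ℕ) :
    window x i l = (List.range l).map (fun k : ℕ => x (i + (k : ℤ))) := by
  simp only [window, List.bind_eq_flatMap, List.pure_def, ← List.map_eq_flatMap,
    List.map_map]
  rfl

lemma window_length (x : ℤ → A) (i : ℤ) (l : ℕ) : (window x i l).length = l := by
  rw [window_eq, List.length_map, List.length_range]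

lemma window_mem_langOf {X : Set (ℤ → A)} {x : ℤ → A} (hx : x ∈ X) (i : ℤ) (l : ℕ) :
    window x i l ∈ langOf X := ⟨x, hx, i, by rw [window_length]⟩

lemma window_succ (x : ℤ → A) (i : ℤ) (l : ℕ) :
    window x i (l + 1) = window x i l ++ [x (i + l)] := by
  simp only [window_eq]
  rw [List.range_succ]
  simp

lemma window_cons (x : ℤ → A) (i : ℤ) (l : ℕ) :
    window x i (l + 1) = x i :: window x (i + 1) l := by
  simp only [window_eq, List.range_succ_eq_map, List.map_cons, List.map_map]
  congr 1
  · simp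
  · apply List.map_congr_left
    intro k _
    simp only [Function.comp_apply]
    congr 1
    push_cast
    ring

lemma window_get (x : ℤ → A) (i : ℤ) (l : ℕ) (j : ℕ) (h : j < (window x i l).length) :
    (window x i l).get ⟨j, h⟩ = x (i + (j : ℤ)) := by
  have hj : j < l := by simpa [window_length] using h
  simp only [window_eq, List.get_eq_getElem, List.getElem_map, List.getElem_range]

lemma wsum_window (c : A → ℝ) (x : ℤ → A) (i : ℤ) (l : ℕ) :
    wsum c (window x i l) = ∑ k ∈ Finset.range l, c (x (i + (k : ℤ))) := by
  induction l with
  | zero => simp [wsum, window_eq]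
  | succ l ih =>
      have happ : ∀ u : List A, ∀ b : A, wsum c (u ++ [b]) = wsum c u + c b := by
        intro u b; simp [wsum]
      rw [window_succ, happ, ih, Finset.sum_range_succ]

lemma returnWord_of_consecutive {X : Set (ℤ → A)} {x : ℤ → A} (hx : x ∈ X)
    {a : A} (p : ℤ) (L : ℕ) (hL : 0 < L)
    (hp : x p = a) (hend : x (p + L) = a)
    (hmid : ∀ j : ℕ, 0 < j → j < L → x (p + j) ≠ a) :
    IsReturnWord X a (window x p L) := by
  refine ⟨?_, ?_, ?_⟩
  · have h1 : window x p L ++ [a] = window x p (L + 1) := by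
      rw [window_succ, hend]
    rw [h1]; exact window_mem_langOf hx _ _
  · obtain ⟨L', rfl⟩ : ∃ L', L = L' + 1 := ⟨L - 1, (Nat.succ_pred_eq_of_pos hL).symm⟩
    rw [window_cons, hp]; rfl
  · intro j h hj
    rw [window_get]
    have hjL : j < L := by simpa [window_length] using h
    exact hmid j hj hjL

lemma shiftIter_mem [TopologicalSpace A] {X : Set (ℤ → A)} (hX : IsSubshift X)
    {x : ℤ → A} (hx : x ∈ X) (k : ℤ) : shiftIter k x ∈ X := by
  have hfwd : ∀ y ∈ X, shift y ∈ X := by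
    intro y hy
    rw [← hX.2]; exact ⟨y, hy, rfl⟩
  have hbwd : ∀ y ∈ X, shiftIter (-1) y ∈ X := by
    intro y hy
    rw [← hX.2] at hy
    obtain ⟨z, hz, hzy⟩ := hy
    have : shiftIter (-1) y = z := by
      funext n
      have : z (n - 1 + 1) = y (n - 1) := congrFun hzy (n - 1)
      simpa [shiftIter, sub_add_cancel, sub_eq_add_neg] using this.symm
    rwa [this]
  induction k using Int.induction_on with
  | zero =>
      have h0 : shiftIter 0 x = x := funext fun n => by simp [shiftIter]
      rwa [h0]
  | succ k ih =>
      have := hfwd _ ih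
      have heq : shift (shiftIter k x) = shiftIter (k + 1) x := by
        funext n; simp [shift, shiftIter]; ring_nf
      rwa [heq] at this
  | pred k ih =>
      have := hbwd _ ih
      have heq : shiftIter (-1) (shiftIter (-k) x) = shiftIter (-(k:ℤ)-1) x := by
        funext n; simp only [shiftIter]; ring_nf
      rwa [heq] at this

lemma exists_gap_bound [Finite A] [TopologicalSpace A] [DiscreteTopology A]
    {X : Set (ℤ → A)} (hX : IsMinimalSubshift X) :
    ∃ (a₀ : A) (R : ℕ), 0 < R ∧ ∀ x ∈ X, ∀ i : ℤ, ∃ r : ℕ, r < R ∧ x (i + (r : ℤ)) = a₀ := by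
  obtain ⟨hsub, ⟨x₀, hx₀⟩, hmin⟩ := hX
  set a₀ := x₀ 0 with ha₀
  -- every point of X sees a₀ somewhere
  have hsee : ∀ y ∈ X, ∃ k : ℤ, y k = a₀ := by
    intro y hy
    have hx₀cl : x₀ ∈ closure (orbit y) := hmin y hy hx₀
    have hVopen : IsOpen {z : ℤ → A | z 0 = a₀} := by
      have : {z : ℤ → A | z 0 = a₀} = (fun z : ℤ → A => z 0) ⁻¹' {a₀} := rfl
      rw [this]
      exact (continuous_apply 0).isOpen_preimage _ (isOpen_discrete _)
    have := (mem_closure_iff.mp hx₀cl) _ hVopen rfl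
    obtain ⟨z, hz0, k, hk⟩ := this
    refine ⟨k, ?_⟩
    rw [← hk] at hz0
    have : y (0 + k) = a₀ := hz0
    simpa using this
  -- compactness: finite subcover
  have hXcomp : IsCompact X := hsub.1.isCompact
  have hcover : X ⊆ ⋃ k : ℤ, (fun z : ℤ → A => z k) ⁻¹' {a₀} := by
    intro y hy
    obtain ⟨k, hk⟩ := hsee y hy
    exact Set.mem_iUnion.mpr ⟨k, hk⟩
  obtain ⟨t, ht⟩ := hXcomp.elim_finite_subcover _
    (fun k : ℤ => (continuous_apply k).isOpen_preimage _ (isOpen_discrete {a₀})) hcover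
  have htne : t.Nonempty := by
    rcases Set.mem_iUnion₂.mp (ht hx₀) with ⟨k, hk, _⟩
    exact ⟨k, hk⟩
  set m := t.min' htne
  set M := t.max' htne
  refine ⟨a₀, (M - m).toNat + 1, Nat.succ_pos _, ?_⟩
  intro x hx i
  have hz : shiftIter (i - m) x ∈ X := shiftIter_mem hsub hx _
  rcases Set.mem_iUnion₂.mp (ht hz) with ⟨k, hkt, hk⟩
  have hk' : x (k + (i - m)) = a₀ := hk
  have hmk : m ≤ k := t.min'_le k hkt
  have hkM : k ≤ M := t.le_max' k hkt
  refine ⟨(k - m).toNat, ?_, ?_⟩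
  · have : k - m ≤ M - m := by omega
    omega
  · have : ((k - m).toNat : ℤ) = k - m := Int.toNat_of_nonneg (by omega)
    rw [this]
    rw [show i + (k - m) = k + (i - m) by ring]
    exact hk'


lemma sum_return_zero {X : Set (ℤ → A)} {c : A → ℝ} (hc : IsLetterCoboundary X c)
    {x : ℤ → A} (hx : x ∈ X) {a : A} (p : ℤ) (L : ℕ) (hL : 0 < L)
    (hp : x p = a) (hend : x (p + L) = a)
    (hmid : ∀ j : ℕ, 0 < j → j < L → x (p + j) ≠ a) :
    ∑ k ∈ Finset.range L, c (x (p + (k : ℤ))) = 0 := by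
  have := hc a _ (returnWord_of_consecutive hx p L hL hp hend hmid)
  rwa [wsum_window] at this

lemma birkhoff_bound [Fintype A] [TopologicalSpace A] [DiscreteTopology A]
    {X : Set (ℤ → A)} (hX : IsMinimalSubshift X)
    {c : A → ℝ} (hc : IsLetterCoboundary X c) :
    ∃ C : ℝ, ∀ x ∈ X, ∀ n : ℕ,
      |∑ i ∈ Finset.range n, c (x (i : ℤ))| ≤ C := by
  classical
  obtain ⟨a₀, R, hR, hgap⟩ := exists_gap_bound hX
  set M₀ : ℝ := ∑ a : A, |c a| with hM₀def
  have hM₀nonneg : 0 ≤ M₀ := Finset.sum_nonneg fun a _ => abs_nonneg _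
  have hM₀ : ∀ a : A, |c a| ≤ M₀ :=
    fun a => Finset.single_le_sum (fun b _ => abs_nonneg (c b)) (Finset.mem_univ a)
  have hRM : (0:ℝ) ≤ (R:ℝ) * M₀ := mul_nonneg (Nat.cast_nonneg R) hM₀nonneg
  refine ⟨2 * (R:ℝ) * M₀, ?_⟩
  intro x hx n
  set g : ℕ → ℝ := fun n => ∑ i ∈ Finset.range n, c (x (i : ℤ)) with hg
  have hgadd : ∀ p q : ℕ, g (p + q) = g p + ∑ i ∈ Finset.range q, c (x ((p : ℤ) + i)) := by
    intro p q
    induction q with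
    | zero => simp
    | succ q ih =>
        have h1 : g (p + (q + 1)) = g (p + q) + c (x (((p + q : ℕ) : ℤ))) :=
          Finset.sum_range_succ _ _
        rw [h1, ih, Finset.sum_range_succ]
        push_cast
        ring
  have hblock : ∀ p q : ℕ, q ≤ R →
      |∑ i ∈ Finset.range q, c (x ((p : ℤ) + i))| ≤ (R:ℝ) * M₀ := by
    intro p q hq
    calc |∑ i ∈ Finset.range q, c (x ((p : ℤ) + i))|
        ≤ ∑ i ∈ Finset.range q, |c (x ((p : ℤ) + i))| := Finset.abs_sum_le_sum_abs _ _
      _ ≤ ∑ _i ∈ Finset.range q, M₀ := Finset.sum_le_sum fun i _ => hM₀ _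
      _ = (q : ℝ) * M₀ := by rw [Finset.sum_const, Finset.card_range, nsmul_eq_mul]
      _ ≤ (R : ℝ) * M₀ := by
          apply mul_le_mul_of_nonneg_right _ hM₀nonneg
          exact_mod_cast hq
  have hnext : ∀ p : ℕ, x (p : ℤ) = a₀ →
      ∃ p' : ℕ, p < p' ∧ p' ≤ p + R ∧ x (p' : ℤ) = a₀ ∧ g p' = g p := by
    intro p hp
    obtain ⟨r, hrR, hr⟩ := hgap x hx ((p : ℤ) + 1)
    have hex : ∃ k : ℕ, x ((p : ℤ) + 1 + k) = a₀ := ⟨r, hr⟩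
    set k₀ := Nat.find hex with hk₀
    have hk₀spec : x ((p : ℤ) + 1 + k₀) = a₀ := Nat.find_spec hex
    have hk₀lt : k₀ < R := lt_of_le_of_lt (Nat.find_min' hex hr) hrR
    have h0 : ∑ i ∈ Finset.range (k₀ + 1), c (x ((p : ℤ) + i)) = 0 := by
      apply sum_return_zero hc hx (p : ℤ) (k₀ + 1) (Nat.succ_pos _) hp
      · have : (p : ℤ) + ((k₀ + 1 : ℕ) : ℤ) = (p : ℤ) + 1 + (k₀ : ℤ) := by push_cast; ring
        rw [this]
        exact hk₀spec
      · intro j hj hjlt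
        have hjk : j - 1 < k₀ := by omega
        have hnot := Nat.find_min hex hjk
        intro hcontra
        apply hnot
        have heq : (p : ℤ) + 1 + ((j - 1 : ℕ) : ℤ) = (p : ℤ) + (j : ℤ) := by omega
        rw [heq]
        exact hcontra
    refine ⟨p + 1 + k₀, by omega, by omega, ?_, ?_⟩
    · have : ((p + 1 + k₀ : ℕ) : ℤ) = (p : ℤ) + 1 + (k₀ : ℤ) := by push_cast; ring
      rw [this]
      exact hk₀spec
    · have hpk : p + 1 + k₀ = p + (k₀ + 1) := by omega
      rw [hpk, hgadd, h0, add_zero]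
  have key : ∀ d p n : ℕ, x (p : ℤ) = a₀ → p ≤ n → n - p ≤ d → |g n - g p| ≤ (R:ℝ) * M₀ := by
    intro d
    induction d with
    | zero =>
        intro p n hp hpn hd
        have hnp : n = p := by omega
        subst hnp
        simpa using hRM
    | succ d ih =>
        intro p n hp hpn hd
        by_cases hcase : n ≤ p + R
        · have h := hgadd p (n - p)
          have hn : p + (n - p) = n := by omega
          rw [hn] at h
          rw [h, add_sub_cancel_left]
          exact hblock p (n - p) (by omega)
        · obtain ⟨p', hpp', hp'R, hp'occ, hgp'⟩ := hnext p hp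
          have := ih p' n hp'occ (by omega) (by omega)
          rwa [hgp'] at this
  obtain ⟨r, hrR, hr0⟩ := hgap x hx 0
  have hr0' : x (r : ℤ) = a₀ := by simpa using hr0
  have habs : ∀ m : ℕ, m ≤ R → |g m| ≤ (R:ℝ) * M₀ := by
    intro m hm
    have h := hblock 0 m hm
    have h2 : g m = ∑ i ∈ Finset.range m, c (x ((0 : ℤ) + i)) := by
      simp only [hg]
      exact Finset.sum_congr rfl fun i _ => by rw [zero_add]
    rw [h2]
    exact h
  rcases le_or_gt r n with hnr | hnr
  · have h1 := key (n - r) r n hr0' hnr le_rfl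
    have h2 := habs r (le_of_lt hrR)
    calc |g n| = |(g n - g r) + g r| := by ring_nf
      _ ≤ |g n - g r| + |g r| := abs_add_le _ _
      _ ≤ (R:ℝ) * M₀ + (R:ℝ) * M₀ := add_le_add h1 h2
      _ = 2 * (R:ℝ) * M₀ := by ring
  · have h := habs n (by omega)
    linarith


/-- **Lemma 3.5.** Let `X` be a minimal subshift and `c` a letter-coboundary on `X`.
Then `Σ_a μ([a]) c(a) = 0` for every `S`-invariant Borel probability measure `μ` on `X`. -/
theorem coboundary_integral_zero
    {A : Type*} [Fintype A] [TopologicalSpace A] [DiscreteTopology A]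
    [MeasurableSpace A] [BorelSpace A]
    (X : Set (ℤ → A)) (hX : IsMinimalSubshift X)
    (c : A → ℝ) (hc : IsLetterCoboundary X c)
    (μ : Measure (ℤ → A)) (hprob : IsProbabilityMeasure μ) (hXfull : μ X = 1)
    (hinv : ∀ B : Set (ℤ → A), MeasurableSet B → μ (shift ⁻¹' B) = μ B) :
    ∑ a : A, (μ (cyl X [a])).toReal * c a = 0 := by
  obtain ⟨C, hC⟩ := birkhoff_bound hX hc
  have hSmeas : ∀ (j : ℤ) (a : A), MeasurableSet {x : ℤ → A | x j = a} := by
    intro j a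
    have hm : Measurable (fun x : ℤ → A => x j) := measurable_pi_apply j
    exact hm ((isOpen_discrete ({a} : Set A)).measurableSet)
  have hshift_meas : ∀ (j : ℕ) (a : A),
      μ {x : ℤ → A | x (j : ℤ) = a} = μ {x : ℤ → A | x 0 = a} := by
    intro j a
    induction j with
    | zero => norm_num
    | succ j ih =>
        have h1 : μ {x : ℤ → A | x ((j : ℤ) + 1) = a} = μ {x : ℤ → A | x (j : ℤ) = a} :=
          hinv {x : ℤ → A | x (j : ℤ) = a} (hSmeas j a)
        have h2 : ((j + 1 : ℕ) : ℤ) = (j : ℤ) + 1 := by push_cast; ring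
        rw [h2, h1, ih]
  set T : ℝ := ∑ a : A, (μ {x : ℤ → A | x 0 = a}).toReal * c a with hT
  have hint : ∀ j : ℕ, Integrable (fun x : ℤ → A => c (x (j : ℤ))) μ ∧
      ∫ x, c (x (j : ℤ)) ∂μ = T := by
    intro j
    have hrep : (fun x : ℤ → A => c (x (j : ℤ))) =
        fun x => ∑ a : A, Set.indicator {y : ℤ → A | y (j : ℤ) = a} (fun _ => c a) x := by
      funext x
      symm
      rw [Finset.sum_eq_single (x (j : ℤ))]
      · exact Set.indicator_of_mem rfl _
      · intro b _ hb
        exact Set.indicator_of_notMem (fun h => hb (Eq.symm h)) _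
      · intro h; exact absurd (Finset.mem_univ _) h
    have hintg : ∀ a : A,
        Integrable (Set.indicator {y : ℤ → A | y (j : ℤ) = a} (fun _ => c a)) μ :=
      fun a => (integrable_const (c a)).indicator (hSmeas _ a)
    constructor
    · rw [hrep]
      exact integrable_finset_sum _ (fun a _ => hintg a)
    · rw [hrep, integral_finset_sum _ (fun a _ => hintg a)]
      have hval : ∀ a : A,
          ∫ x, Set.indicator {y : ℤ → A | y (j : ℤ) = a} (fun _ => c a) x ∂μ
            = (μ {y : ℤ → A | y (j : ℤ) = a}).toReal * c a := by
        intro a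
        rw [integral_indicator_const _ (hSmeas _ a), smul_eq_mul]
        rfl
      rw [Finset.sum_congr rfl fun a _ => hval a, hT]
      exact Finset.sum_congr rfl fun a _ => by rw [hshift_meas j a]
  have hsum : ∀ n : ℕ, ∫ x, (∑ i ∈ Finset.range n, c (x (i : ℤ))) ∂μ = (n : ℝ) * T := by
    intro n
    rw [integral_finset_sum _ (fun i _ => (hint i).1)]
    rw [Finset.sum_congr rfl fun i _ => (hint i).2]
    rw [Finset.sum_const, Finset.card_range, nsmul_eq_mul]
  have hXmeas : MeasurableSet X := hX.1.1.measurableSet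
  have hXc : μ Xᶜ = 0 := by
    rw [measure_compl hXmeas (measure_ne_top μ X), hXfull, measure_univ]
    simp
  have hbound : ∀ n : ℕ, (n : ℝ) * |T| ≤ C := by
    intro n
    have haebound : ∀ᵐ x ∂μ, ‖∑ i ∈ Finset.range n, c (x (i : ℤ))‖ ≤ C := by
      have hXae : X ∈ ae μ := by rw [mem_ae_iff]; exact hXc
      filter_upwards [hXae] with x hx
      rw [Real.norm_eq_abs]
      exact hC x hx n
    have h := norm_integral_le_of_norm_le_const haebound
    rw [hsum n] at h
    simpa [Real.norm_eq_abs, abs_mul, measure_univ] using h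
  have hTzero : T = 0 := by
    by_contra hT0
    obtain ⟨n, hn⟩ := exists_nat_gt (C / |T|)
    have hTpos : 0 < |T| := abs_pos.mpr hT0
    have h1 := hbound n
    have h2 : (n : ℝ) ≤ C / |T| := by
      rw [le_div_iff₀ hTpos]
      exact h1
    linarith
  have hcyl : ∀ a : A, μ (cyl X [a]) = μ {x : ℤ → A | x 0 = a} := by
    intro a
    have hset : cyl X [a] = {x : ℤ → A | x 0 = a} ∩ X := by
      ext x
      have hw1 : window x 0 1 = [x 0] := by rw [window_eq, show List.range 1 = [0] from rfl]; simp
      simp only [cyl, Set.mem_setOf_eq, Set.mem_inter_iff, List.length_singleton, hw1]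
      constructor
      · rintro ⟨hxX, hw⟩
        exact ⟨by injection hw, hxX⟩
      · rintro ⟨hx0, hxX⟩
        exact ⟨hxX, by rw [hx0]⟩
    rw [hset]
    apply le_antisymm (measure_mono Set.inter_subset_left)
    calc μ {x : ℤ → A | x 0 = a}
        ≤ μ ({x : ℤ → A | x 0 = a} ∩ X) + μ ({x : ℤ → A | x 0 = a} \ X) :=
          measure_le_inter_add_diff μ _ X
      _ ≤ μ ({x : ℤ → A | x 0 = a} ∩ X) + μ Xᶜ :=
          add_le_add le_rfl (measure_mono fun y hy => hy.2)
      _ = μ ({x : ℤ → A | x 0 = a} ∩ X) := by rw [hXc, add_zero]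
  calc ∑ a : A, (μ (cyl X [a])).toReal * c a
      = T := by rw [hT]; exact Finset.sum_congr rfl fun a _ => by rw [hcyl a]
    _ = 0 := hTzero

end SAdicPaper
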